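/- For any decoding functions D_y : {0,...,d-1} → {0,...,d-1} (y ∈ {0,...,n-1}) and any encoding E, there exist an encoding E' such that the identity-decoding strategy (E', id) achieves average success probability at least that of (E, D). -/

import Mathlib

open Finset

namespace Stmt18Aux

variable {n d : ℕ}

/-- number of coordinates where the string `b m` agrees with `a`. -/
def cnt (b : Fin d → Fin n → Fin d) (a : Fin n → Fin d) (m : Fin d) : ℕ :=
  ∑ y : Fin n, if b m y = a y then 1 else 0

/-- total success count of the strategy "encode `a` by the best message `m`,
decode message `m` at position `y` as `b m y`". -/
def G (b : Fin d → Fin n → Fin d) : ℕ :=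
  ∑ a : Fin n → Fin d, univ.sup (cnt b a)

lemma sup_add_ite (hd : 0 < d) (c : Fin d → ℕ) (P : Fin d → Prop) [DecidablePred P] :
    (univ.sup fun m => (if P m then 1 else 0) + c m)
      = univ.sup c + (if ∃ m, P m ∧ c m = univ.sup c then 1 else 0) := by
  have hne : (univ : Finset (Fin d)).Nonempty := ⟨⟨0, hd⟩, mem_univ _⟩
  obtain ⟨m0, -, hm0⟩ := Finset.exists_mem_eq_sup univ hne c
  by_cases h : ∃ m, P m ∧ c m = univ.sup c
  · obtain ⟨m1, hPm1, hcm1⟩ := h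
    rw [if_pos ⟨m1, hPm1, hcm1⟩]
    apply le_antisymm
    · apply Finset.sup_le
      intro m _
      have : c m ≤ univ.sup c := Finset.le_sup (mem_univ m)
      split_ifs <;> omega
    · calc univ.sup c + 1 = (if P m1 then 1 else 0) + c m1 := by
            rw [if_pos hPm1, hcm1]; omega
        _ ≤ _ := Finset.le_sup (f := fun m => (if P m then 1 else 0) + c m) (mem_univ m1)
  · rw [if_neg h, add_zero]
    apply le_antisymm
    · apply Finset.sup_le
      intro m _
      have h1 : c m ≤ univ.sup c := Finset.le_sup (mem_univ m)
      by_cases hP : P m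
      · have h2 : c m ≠ univ.sup c := fun hc => h ⟨m, hP, hc⟩
        rw [if_pos hP]; omega
      · rw [if_neg hP]; omega
    · calc univ.sup c = c m0 := hm0
        _ ≤ (if P m0 then 1 else 0) + c m0 := Nat.le_add_left _ _
        _ ≤ _ := Finset.le_sup (f := fun m => (if P m then 1 else 0) + c m) (mem_univ m0)

lemma core (hd : 0 < d) (c : Fin d → ℕ) (t : Fin d → Fin d) :
    (∑ v : Fin d, univ.sup fun m => (if t m = v then 1 else 0) + c m)
      ≤ ∑ v : Fin d, univ.sup fun m => (if m = v then 1 else 0) + c m := by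
  have h1 : ∀ v : Fin d, (univ.sup fun m => (if t m = v then 1 else 0) + c m)
      = univ.sup c + (if ∃ m, t m = v ∧ c m = univ.sup c then 1 else 0) :=
    fun v => sup_add_ite hd c (fun m => t m = v)
  have h2 : ∀ v : Fin d, (univ.sup fun m => (if m = v then 1 else 0) + c m)
      = univ.sup c + (if ∃ m, m = v ∧ c m = univ.sup c then 1 else 0) :=
    fun v => sup_add_ite hd c (fun m => m = v)
  simp only [h1, h2, Finset.sum_add_distrib]
  apply add_le_add_right
  rw [← Finset.card_filter, ← Finset.card_filter]
  have himg : univ.filter (fun v => ∃ m, t m = v ∧ c m = univ.sup c)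
      = (univ.filter fun m => c m = univ.sup c).image t := by
    ext v
    simp only [mem_filter, mem_univ, true_and, Finset.mem_image]
    constructor
    · rintro ⟨m, h1, h2⟩; exact ⟨m, by simp [h2], h1⟩
    · rintro ⟨m, h1, h2⟩; exact ⟨m, h2, by simpa using h1⟩
  have hid : univ.filter (fun v => ∃ m, m = v ∧ c m = univ.sup c)
      = univ.filter fun v => c v = univ.sup c := by
    ext v; simp
  rw [himg, hid]
  exact Finset.card_image_le

lemma exchange (hd : 0 < d) (b : Fin d → Fin n → Fin d) (y₀ : Fin n) :
    G b ≤ G fun m y => if y = y₀ then m else b m y := by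
  classical
  set e := Equiv.funSplitAt y₀ (Fin d) with he
  have hsymm0 : ∀ (v : Fin d) (r : {j : Fin n // j ≠ y₀} → Fin d),
      e.symm (v, r) y₀ = v := by
    intro v r
    simp [he, Equiv.funSplitAt, Equiv.piSplitAt]
  have hsymm1 : ∀ (v : Fin d) (r : {j : Fin n // j ≠ y₀} → Fin d)
      (j : {j : Fin n // j ≠ y₀}), e.symm (v, r) j = r j := by
    intro v r j
    simp [he, Equiv.funSplitAt, Equiv.piSplitAt, j.2]
  have split : ∀ g : Fin n → ℕ,
      ∑ y, g y = g y₀ + ∑ j : {j : Fin n // j ≠ y₀}, g j := by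
    intro g
    rw [← Finset.add_sum_erase _ g (mem_univ y₀)]
    congr 1
    exact Finset.sum_subtype _
      (fun x => ⟨fun h => (Finset.mem_erase.mp h).1,
        fun h => Finset.mem_erase.mpr ⟨h, mem_univ x⟩⟩) g
  have key : ∀ b' : Fin d → Fin n → Fin d, G b' =
      ∑ r : {j : Fin n // j ≠ y₀} → Fin d, ∑ v : Fin d,
        univ.sup fun m => (if b' m y₀ = v then 1 else 0) +
          ∑ j : {j : Fin n // j ≠ y₀}, if b' m j = r j then 1 else 0 := by
    intro b'
    rw [G, ← Equiv.sum_comp e.symm (fun a => univ.sup (cnt b' a)),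
      Fintype.sum_prod_type, Finset.sum_comm]
    refine Finset.sum_congr rfl fun r _ => Finset.sum_congr rfl fun v _ => ?_
    congr 1
    funext m
    rw [cnt, split (fun y => if b' m y = e.symm (v, r) y then 1 else 0)]
    congr 1
    · rw [hsymm0]
    · exact Finset.sum_congr rfl fun j _ => by rw [hsymm1 v r j]
  rw [key b, key (fun m y => if y = y₀ then m else b m y)]
  apply Finset.sum_le_sum
  intro r _
  have hb'0 : ∀ m : Fin d, (if y₀ = y₀ then m else b m y₀) = m := fun m => if_pos rfl
  have hb' : ∀ (m : Fin d) (j : {j : Fin n // j ≠ y₀}),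
      (if (j : Fin n) = y₀ then m else b m j) = b m j := fun m j => if_neg j.2
  simp only [hb'0, hb']
  exact core hd (fun m => ∑ j : {j : Fin n // j ≠ y₀}, if b m j = r j then 1 else 0)
    (fun m => b m y₀)

/-- interpolating family: columns `< k` are identity, the rest decode via `D`. -/
def B (D : Fin n → Fin d → Fin d) (k : ℕ) : Fin d → Fin n → Fin d :=
  fun m y => if (y : ℕ) < k then m else D y m

lemma GB_mono (hd : 0 < d) (D : Fin n → Fin d → Fin d) :
    ∀ k, k ≤ n → G (B D 0) ≤ G (B D k) := by
  intro k
  induction k with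
  | zero => intro _; exact le_rfl
  | succ k ih =>
    intro hk
    have hkn : k < n := hk
    refine (ih (Nat.le_of_lt hkn)).trans ?_
    have hBk : B D (k + 1) = fun m y => if y = (⟨k, hkn⟩ : Fin n) then m else B D k m y := by
      funext m y
      by_cases hy : y = (⟨k, hkn⟩ : Fin n)
      · subst hy
        rw [if_pos rfl]
        exact if_pos (Nat.lt_succ_self k)
      · rw [if_neg hy]
        have hyk : (y : ℕ) ≠ k := fun h => hy (Fin.ext h)
        exact if_congr (by omega) rfl rfl
    rw [hBk]
    exact exchange hd (B D k) _

end Stmt18Aux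

open Stmt18Aux in
/-- For any strategy `(E, D)` of the `d`-dimensional RAC with `n` dits, there is an
encoding `E'` such that the identity-decoding strategy `(E', id)` achieves average
success probability at least that of `(E, D)`. -/
theorem stmt_18 (n d : ℕ) (hn : 0 < n) (hd : 0 < d)
    (E : (Fin n → Fin d) → Fin d) (D : Fin n → Fin d → Fin d) :
    ∃ E' : (Fin n → Fin d) → Fin d,
      (∑ a : Fin n → Fin d, ∑ y : Fin n, if D y (E a) = a y then (1 : ℝ) else 0)
          / (n * d ^ n)
        ≤ (∑ a : Fin n → Fin d, ∑ y : Fin n, if E' a = a y then (1 : ℝ) else 0)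
          / (n * d ^ n) := by
  classical
  have hne : (univ : Finset (Fin d)).Nonempty := ⟨⟨0, hd⟩, mem_univ _⟩
  -- the majority encoding
  set f : (Fin n → Fin d) → Fin d → ℕ :=
    fun a m => ∑ y : Fin n, if m = a y then 1 else 0 with hf
  have hEx : ∀ a : Fin n → Fin d, ∃ m ∈ (univ : Finset (Fin d)),
      univ.sup (f a) = f a m := fun a => Finset.exists_mem_eq_sup univ hne (f a)
  refine ⟨fun a => (hEx a).choose, ?_⟩
  have hE' : ∀ a : Fin n → Fin d,
      univ.sup (f a) = f a ((hEx a).choose) := fun a => (hEx a).choose_spec.2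
  -- the key natural-number inequality
  have hnat : (∑ a : Fin n → Fin d, ∑ y : Fin n, if D y (E a) = a y then 1 else 0)
      ≤ ∑ a : Fin n → Fin d, ∑ y : Fin n,
          if (hEx a).choose = a y then 1 else 0 := by
    have step1 : (∑ a : Fin n → Fin d, ∑ y : Fin n, if D y (E a) = a y then 1 else 0)
        ≤ G (B D 0) := by
      apply Finset.sum_le_sum
      intro a _
      calc (∑ y : Fin n, if D y (E a) = a y then 1 else 0)
          = cnt (B D 0) a (E a) := by
            rw [cnt]
            refine Finset.sum_congr rfl fun y _ => ?_
            rw [show B D 0 (E a) y = D y (E a) from if_neg (by omega)]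
        _ ≤ univ.sup (cnt (B D 0) a) := Finset.le_sup (mem_univ _)
    have step2 : G (B D 0) ≤ G (B D n) := GB_mono hd D n le_rfl
    have step3 : G (B D n) = ∑ a : Fin n → Fin d, ∑ y : Fin n,
        if (hEx a).choose = a y then 1 else 0 := by
      rw [G]
      refine Finset.sum_congr rfl fun a _ => ?_
      have hcnt : cnt (B D n) a = f a := by
        funext m
        rw [cnt, hf]
        refine Finset.sum_congr rfl fun y _ => ?_
        rw [show B D n m y = m from if_pos y.isLt]
      rw [hcnt]
      -- definitional
      exact hE' a
    calc _ ≤ G (B D 0) := step1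
      _ ≤ G (B D n) := step2
      _ = _ := step3
  have hcast1 : (∑ a : Fin n → Fin d, ∑ y : Fin n, if D y (E a) = a y then (1:ℝ) else 0)
      = ((∑ a : Fin n → Fin d, ∑ y : Fin n, if D y (E a) = a y then 1 else 0 : ℕ) : ℝ) := by
    simp [Nat.cast_sum]
  have hcast2 : (∑ a : Fin n → Fin d, ∑ y : Fin n,
        if (hEx a).choose = a y then (1:ℝ) else 0)
      = ((∑ a : Fin n → Fin d, ∑ y : Fin n,
          if (hEx a).choose = a y then 1 else 0 : ℕ) : ℝ) := by
    simp [Nat.cast_sum]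
  rw [hcast1, hcast2]
  gcongr
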